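/- Let N ≥ 3 be an integer. Then for every t ∈ (0, π), 2(N² − 1)·sin t − 3N·sin(N t)·cos t + (N² + 2)·cos(N t)·sin t ≥ 0. -/

import Mathlib

set_option maxHeartbeats 1000000

open Real

/-- If `f 0 = 0` and `f` has everywhere a derivative `f'` that is nonnegative on `[0, ∞)`,
then `f x ≥ 0` for `x ≥ 0`. -/
private lemma nonneg_of_deriv (f f' : ℝ → ℝ) (hd : ∀ y, HasDerivAt f (f' y) y)
    (h0 : f 0 = 0) (hpos : ∀ y, 0 ≤ y → 0 ≤ f' y) {x : ℝ} (hx : 0 ≤ x) : 0 ≤ f x := by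
  have hm : MonotoneOn f (Set.Ici (0:ℝ)) := by
    apply monotoneOn_of_deriv_nonneg (convex_Ici 0)
    · exact fun y _ => (hd y).continuousAt.continuousWithinAt
    · intro y _
      exact (hd y).differentiableAt.differentiableWithinAt
    · intro y hy
      rw [(hd y).deriv]
      have hy' : (0:ℝ) < y := by simpa [interior_Ici] using hy
      exact hpos y hy'.le
  have h := hm (Set.mem_Ici.mpr le_rfl) (Set.mem_Ici.mpr hx) hx
  rw [h0] at h
  exact h

private lemma sin_ge_cubic {x : ℝ} (hx : 0 ≤ x) : x - x^3/6 ≤ Real.sin x := by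
  have h := nonneg_of_deriv (fun y => Real.sin y - (y - y^3/6))
      (fun y => Real.cos y - (1 - y^2/2)) (fun y => ?_) (by norm_num) (fun y hy => ?_) hx
  · linarith [h]
  · have h1 : HasDerivAt (fun y : ℝ => y^3) (3*y^2) y := by
      simpa using hasDerivAt_pow 3 y
    have h2 : HasDerivAt (fun z : ℝ => z - z^3/6) (1 - y^2/2) y := by
      have := (hasDerivAt_id y).sub (h1.div_const 6)
      exact this.congr_deriv (by ring)
    exact (Real.hasDerivAt_sin y).sub h2
  · have := Real.one_sub_sq_div_two_le_cos (x := y)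
    linarith

private lemma cos_le_quartic {x : ℝ} (hx : 0 ≤ x) : Real.cos x ≤ 1 - x^2/2 + x^4/24 := by
  have h := nonneg_of_deriv (fun y => 1 - y^2/2 + y^4/24 - Real.cos y)
      (fun y => -(y - y^3/6) + Real.sin y) (fun y => ?_) (by norm_num) (fun y hy => ?_) hx
  · linarith [h]
  · have h1 : HasDerivAt (fun y : ℝ => y^2) (2*y) y := by
      simpa using hasDerivAt_pow 2 y
    have h2 : HasDerivAt (fun y : ℝ => y^4) (4*y^3) y := by
      simpa using hasDerivAt_pow 4 y
    have h3 : HasDerivAt (fun z : ℝ => 1 - z^2/2 + z^4/24) (-(y - y^3/6)) y := by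
      have := (((hasDerivAt_const y (1:ℝ)).sub (h1.div_const 2)).add (h2.div_const 24))
      exact this.congr_deriv (by ring)
    have := h3.sub (Real.hasDerivAt_cos y)
    exact this.congr_deriv (by ring)
  · have := sin_ge_cubic hy
    linarith

private lemma sin_le_quintic {x : ℝ} (hx : 0 ≤ x) :
    Real.sin x ≤ x - x^3/6 + x^5/120 := by
  have h := nonneg_of_deriv (fun y => y - y^3/6 + y^5/120 - Real.sin y)
      (fun y => (1 - y^2/2 + y^4/24) - Real.cos y) (fun y => ?_) (by norm_num)
      (fun y hy => ?_) hx
  · linarith [h]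
  · have h1 : HasDerivAt (fun y : ℝ => y^3) (3*y^2) y := by
      simpa using hasDerivAt_pow 3 y
    have h2 : HasDerivAt (fun y : ℝ => y^5) (5*y^4) y := by
      simpa using hasDerivAt_pow 5 y
    have h3 : HasDerivAt (fun z : ℝ => z - z^3/6 + z^5/120) (1 - y^2/2 + y^4/24) y := by
      have := ((hasDerivAt_id y).sub (h1.div_const 6)).add (h2.div_const 120)
      exact this.congr_deriv (by ring)
    exact h3.sub (Real.hasDerivAt_sin y)
  · have := cos_le_quartic hy
    linarith

private lemma cos_ge_sextic {x : ℝ} (hx : 0 ≤ x) :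
    1 - x^2/2 + x^4/24 - x^6/720 ≤ Real.cos x := by
  have h := nonneg_of_deriv (fun y => Real.cos y - (1 - y^2/2 + y^4/24 - y^6/720))
      (fun y => -Real.sin y + (y - y^3/6 + y^5/120)) (fun y => ?_) (by norm_num)
      (fun y hy => ?_) hx
  · linarith [h]
  · have h1 : HasDerivAt (fun y : ℝ => y^2) (2*y) y := by
      simpa using hasDerivAt_pow 2 y
    have h2 : HasDerivAt (fun y : ℝ => y^4) (4*y^3) y := by
      simpa using hasDerivAt_pow 4 y
    have h3 : HasDerivAt (fun y : ℝ => y^6) (6*y^5) y := by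
      simpa using hasDerivAt_pow 6 y
    have h4 : HasDerivAt (fun z : ℝ => 1 - z^2/2 + z^4/24 - z^6/720)
        (-(y - y^3/6 + y^5/120)) y := by
      have := (((hasDerivAt_const y (1:ℝ)).sub (h1.div_const 2)).add (h2.div_const 24)).sub
        (h3.div_const 720)
      exact this.congr_deriv (by ring)
    have := (Real.hasDerivAt_cos y).sub h4
    exact this.congr_deriv (by ring)
  · have := sin_le_quintic hy
    linarith

/-- Region A: when `sin² t` is not too small, a Cauchy–Schwarz argument works. -/
private lemma regionA (n t : ℝ) (hn : 3 ≤ n) (hst : 0 < Real.sin t)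
    (h3 : 3 ≤ (n^2 - 1) * Real.sin t ^ 2) :
    0 ≤ 2*(n^2-1)*Real.sin t - 3*n*Real.sin (n*t)*Real.cos t
        + (n^2+2)*Real.cos (n*t)*Real.sin t := by
  have hnt : n*t = (n-1)*t + t := by ring
  have hsin : Real.sin (n*t) = Real.sin ((n-1)*t) * Real.cos t + Real.cos ((n-1)*t) * Real.sin t := by
    rw [hnt, Real.sin_add]
  have hcos : Real.cos (n*t) = Real.cos ((n-1)*t) * Real.cos t - Real.sin ((n-1)*t) * Real.sin t := by
    rw [hnt, Real.cos_add]
  rw [hsin, hcos]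
  set sa := Real.sin t with hsa
  set ca := Real.cos t with hca
  set A := Real.sin ((n-1)*t) with hA
  set B := Real.cos ((n-1)*t) with hB
  have hpy1 : sa^2 + ca^2 = 1 := Real.sin_sq_add_cos_sq t
  have hpy2 : A^2 + B^2 = 1 := Real.sin_sq_add_cos_sq ((n-1)*t)
  set X := 2*(n^2-1)*sa with hX
  set α := (n-1)*(n-2)*sa^2 + 3*n with hal
  set β := (n-1)*(n-2)*sa*ca with hbe
  have hXpos : 0 < X := by
    rw [hX]
    have h8 : (0:ℝ) < n^2 - 1 := by nlinarith
    nlinarith [mul_pos h8 hst]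
  have hgoal : 2*(n^2-1)*sa - 3*n*(A*ca + B*sa)*ca + (n^2+2)*(B*ca - A*sa)*sa
      = X + β*B - α*A := by
    rw [hX, hal, hbe]
    linear_combination (-3*n*A) * hpy1
  have h5 : X^2 - α^2 - β^2 = 3*n^2*((n^2-1)*sa^2 - 3) := by
    rw [hX, hal, hbe]
    linear_combination (-((n-1)^2*(n-2)^2*sa^2)) * hpy1
  have hX2 : α^2 + β^2 ≤ X^2 := by
    have hc : 0 ≤ (n^2-1)*sa^2 - 3 := by linarith
    have := mul_nonneg (sq_nonneg n) hc
    linarith [h5, this]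
  have hkey : 2*X*(X + β*B - α*A)
      = (X + β*B - α*A)^2 + (α*B + β*A)^2 + (X^2 - α^2 - β^2)*(A^2+B^2)
        + X^2*(1 - (A^2+B^2)) := by ring
  have h6 : 0 ≤ 2*X*(X + β*B - α*A) := by
    rw [hkey, hpy2]
    nlinarith [sq_nonneg (X + β*B - α*A), sq_nonneg (α*B + β*A), hX2]
  rw [hgoal]
  nlinarith [h6, hXpos]

/-- Quantitative bounds in the small-`sin` region. -/
private lemma nt_bounds (n u : ℝ) (hn : 3 ≤ n) (hu0 : 0 < u) (hu2 : u ≤ π/2)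
    (h3 : (n^2-1) * Real.sin u ^ 2 ≤ 3) :
    (n^2-1)*u^2 ≤ 7403/1000 ∧ n*u ≤ π := by
  have hpip : 0 < π := Real.pi_pos
  have hs0 : 0 < Real.sin u :=
    Real.sin_pos_of_pos_of_lt_pi hu0 (lt_of_le_of_lt hu2 (by linarith))
  have hJ : 2/π * u ≤ Real.sin u := Real.mul_le_sin hu0.le hu2
  have hpi1 : (3.141592:ℝ) < π := Real.pi_gt_d6
  have hpi2 : π < 3.141593 := Real.pi_lt_d6
  have h1 : u ≤ π/2 * Real.sin u := by
    have h := mul_le_mul_of_nonneg_left hJ (by positivity : (0:ℝ) ≤ π/2)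
    have e : π/2*(2/π*u) = u := by
      field_simp
    rw [e] at h
    exact h
  have h2 : u^2 ≤ (π/2)^2 * Real.sin u^2 := by nlinarith [h1, hu0.le, hs0.le]
  have hn2 : (0:ℝ) ≤ n^2 - 1 := by nlinarith
  have h4 : (n^2-1)*u^2 ≤ (π/2)^2 * ((n^2-1)*Real.sin u^2) := by
    nlinarith [mul_le_mul_of_nonneg_left h2 hn2]
  have h5 : (π/2)^2 * ((n^2-1)*Real.sin u^2) ≤ (π/2)^2 * 3 :=
    mul_le_mul_of_nonneg_left h3 (sq_nonneg _)
  have hz : (n^2-1)*u^2 ≤ 7403/1000 := by nlinarith [h4, h5, hpi2, hpip]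
  refine ⟨hz, ?_⟩
  have h8 : u^2 ≤ 7403/8000 := by
    have h9 : (8:ℝ) ≤ n^2 - 1 := by nlinarith
    nlinarith [hz, mul_le_mul_of_nonneg_right h9 (sq_nonneg u)]
  have h9 : (n*u)^2 ≤ 8329/1000 := by nlinarith [hz, h8]
  nlinarith [h9, hpi1, hpip, mul_pos (show (0:ℝ) < n by linarith) hu0]


private lemma polyG (a y : ℝ) (ha : 9 ≤ a) (hy0 : 0 ≤ y)
    (hzK : y*(a-1) ≤ 7403/1000) :
    0 ≤ 144*a^2 - 720*a + 360 + y*(-12*a^3 + 24*a^2 + 60*a) + y^2*(2*a^3 - 5*a^2) := by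
  have hz0 : 0 ≤ y*(a-1) := mul_nonneg hy0 (by linarith)
  have hb : (0:ℝ) ≤ a - 9 := by linarith
  have hC : 0 ≤ 2*a^3 - 5*a^2 := by nlinarith
  have hBC : (-12*a^3+24*a^2+60*a)*(a-1) + 2*(2*a^3-5*a^2)*(7403/1000) ≤ 0 := by
    nlinarith [hb, sq_nonneg (a-9), mul_nonneg hb (sq_nonneg (a-9)),
      mul_nonneg (mul_nonneg hb hb) (mul_nonneg hb hb)]
  have hP : (0:ℝ) ≤ (144*a^2-720*a+360)*(a-1)^2
      + (-12*a^3+24*a^2+60*a)*(a-1)*(7403/1000) + (2*a^3-5*a^2)*(7403/1000)^2 := by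
    nlinarith [hb, sq_nonneg (a-9), mul_nonneg hb (sq_nonneg (a-9)),
      mul_nonneg (mul_nonneg hb hb) (mul_nonneg hb hb)]
  have t1 : 0 ≤ ((-12*a^3+24*a^2+60*a)*(a-1) + 2*(2*a^3-5*a^2)*(7403/1000))
      * (y*(a-1) - 7403/1000) := by
    have h' := mul_nonneg (neg_nonneg.2 hBC)
      (neg_nonneg.2 (show y*(a-1) - 7403/1000 ≤ 0 by linarith))
    nlinarith [h']
  have t2 : 0 ≤ (2*a^3-5*a^2) * (y*(a-1) - 7403/1000)^2 := mul_nonneg hC (sq_nonneg _)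
  have e4 : (a-1)^2 * (144*a^2 - 720*a + 360 + y*(-12*a^3 + 24*a^2 + 60*a)
        + y^2*(2*a^3 - 5*a^2))
      = ((144*a^2-720*a+360)*(a-1)^2
          + (-12*a^3+24*a^2+60*a)*(a-1)*(7403/1000) + (2*a^3-5*a^2)*(7403/1000)^2)
        + ((-12*a^3+24*a^2+60*a)*(a-1) + 2*(2*a^3-5*a^2)*(7403/1000))
          * (y*(a-1) - 7403/1000)
        + (2*a^3-5*a^2) * (y*(a-1) - 7403/1000)^2 := by ring
  have h7 : 0 ≤ (a-1)^2 * (144*a^2 - 720*a + 360 + y*(-12*a^3 + 24*a^2 + 60*a)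
      + y^2*(2*a^3 - 5*a^2)) := by
    rw [e4]
    linarith [hP, t1, t2]
  have h8 : (0:ℝ) < (a-1)^2 := by nlinarith
  nlinarith [h7, h8]

private lemma polyKey (n t : ℝ) :
    (t - t^3/6) * (2*(n^2-1) + (n^2+2)*(1 - (n*t)^2/2 + (n*t)^4/24 - (n*t)^6/720))
      - 3*n*((n*t - (n*t)^3/6 + (n*t)^5/120) * (1 - t^2/2 + t^4/24))
    = n^2*t^5*(144*(n^2)^2 - 720*n^2 + 360 + t^2*(-12*(n^2)^3 + 24*(n^2)^2 + 60*n^2)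
        + (t^2)^2*(2*(n^2)^3 - 5*(n^2)^2))/8640 := by ring

private lemma polyLB (w : ℝ) (hw0 : 0 ≤ w) (hw : w ≤ 8329/1000) :
    -(11/10 : ℝ) ≤ 1 - w/2 + w^2/24 - w^3/720 := by
  have q1 : (0:ℝ) ≤ 8329/1000 - w := by linarith
  have q2 : (0:ℝ) ≤ w^2 - 21671/1000*w + 179502241/1000000 := by
    nlinarith [sq_nonneg (w - 21671/2000)]
  nlinarith [mul_nonneg q1 q2]

/-- The hard region near `t = 0`: polynomial Taylor bounds. -/
private lemma nearZero (n t : ℝ) (hn : 3 ≤ n) (ht0 : 0 < t) (ht2 : t ≤ π/2)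
    (h3 : (n^2-1) * Real.sin t ^ 2 ≤ 3) :
    0 ≤ 2*(n^2-1)*Real.sin t - 3*n*Real.sin (n*t)*Real.cos t
        + (n^2+2)*Real.cos (n*t)*Real.sin t := by
  obtain ⟨hz, hntpi⟩ := nt_bounds n t hn ht0 ht2 h3
  have hnt0 : 0 < n*t := mul_pos (by linarith) ht0
  have hsnt : 0 ≤ Real.sin (n*t) := Real.sin_nonneg_of_nonneg_of_le_pi hnt0.le hntpi
  have hcost : 0 ≤ Real.cos t :=
    Real.cos_nonneg_of_mem_Icc ⟨by linarith [Real.pi_pos], ht2⟩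
  have hsint : 0 ≤ Real.sin t :=
    (Real.sin_pos_of_pos_of_lt_pi ht0 (lt_of_le_of_lt ht2 (by linarith [Real.pi_pos]))).le
  have hb3 := sin_ge_cubic ht0.le
  have hb4 := cos_le_quartic ht0.le
  have hb5 := sin_le_quintic hnt0.le
  have hb6 := cos_ge_sextic hnt0.le
  have h9n : (9:ℝ) ≤ n^2 := by nlinarith
  have ht2sq : t^2 ≤ 7403/8000 := by
    nlinarith [hz, mul_le_mul_of_nonneg_right (show (8:ℝ) ≤ n^2-1 by linarith) (sq_nonneg t)]
  have hw : (n*t)^2 ≤ 8329/1000 := by nlinarith [hz, ht2sq]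
  -- bracket nonnegativity
  have hLB' : -(11/10 : ℝ) ≤ 1 - (n*t)^2/2 + ((n*t)^2)^2/24 - ((n*t)^2)^3/720 :=
    polyLB ((n*t)^2) (sq_nonneg _) hw
  have hbr : 0 ≤ 2*(n^2-1) + (n^2+2)*(1 - (n*t)^2/2 + (n*t)^4/24 - (n*t)^6/720) := by
    have h1 := mul_le_mul_of_nonneg_left hLB' (show (0:ℝ) ≤ n^2+2 by positivity)
    nlinarith [h1, h9n]
  -- product bounds
  have hS0 : 0 ≤ n*t - (n*t)^3/6 + (n*t)^5/120 := le_trans hsnt hb5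
  have hprod1 : Real.sin (n*t) * Real.cos t
      ≤ (n*t - (n*t)^3/6 + (n*t)^5/120) * (1 - t^2/2 + t^4/24) :=
    mul_le_mul hb5 hb4 hcost hS0
  have hprod2 : (1 - (n*t)^2/2 + (n*t)^4/24 - (n*t)^6/720) * Real.sin t
      ≤ Real.cos (n*t) * Real.sin t :=
    mul_le_mul_of_nonneg_right hb6 hsint
  have hsin_br : (t - t^3/6) * (2*(n^2-1) + (n^2+2)*(1 - (n*t)^2/2 + (n*t)^4/24 - (n*t)^6/720))
      ≤ Real.sin t * (2*(n^2-1) + (n^2+2)*(1 - (n*t)^2/2 + (n*t)^4/24 - (n*t)^6/720)) :=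
    mul_le_mul_of_nonneg_right hb3 hbr
  -- key polynomial positivity
  have hG := polyG (n^2) (t^2) h9n (sq_nonneg t) (by nlinarith [hz])
  have hpoly : 0 ≤ (t - t^3/6) * (2*(n^2-1) + (n^2+2)*(1 - (n*t)^2/2 + (n*t)^4/24 - (n*t)^6/720))
      - 3*n*((n*t - (n*t)^3/6 + (n*t)^5/120) * (1 - t^2/2 + t^4/24)) := by
    rw [polyKey n t]
    have h9 : (0:ℝ) ≤ n^2*t^5 := mul_nonneg (sq_nonneg n) (by positivity)
    have h10 := mul_nonneg h9 hG
    linarith [h10]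
  -- combine everything
  have e1 : 3*n*(Real.sin (n*t)*Real.cos t)
      ≤ 3*n*((n*t - (n*t)^3/6 + (n*t)^5/120) * (1 - t^2/2 + t^4/24)) :=
    mul_le_mul_of_nonneg_left hprod1 (by linarith)
  have e2 : (n^2+2)*((1 - (n*t)^2/2 + (n*t)^4/24 - (n*t)^6/720)*Real.sin t)
      ≤ (n^2+2)*(Real.cos (n*t)*Real.sin t) :=
    mul_le_mul_of_nonneg_left hprod2 (by positivity)
  linarith [hpoly, e1, e2, hsin_br]

theorem stmt_8 (N : ℕ) (hN : 3 ≤ N) :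
    ∀ t ∈ Set.Ioo (0 : ℝ) π,
      0 ≤ 2 * ((N : ℝ) ^ 2 - 1) * Real.sin t -
          3 * (N : ℝ) * Real.sin ((N : ℝ) * t) * Real.cos t +
          ((N : ℝ) ^ 2 + 2) * Real.cos ((N : ℝ) * t) * Real.sin t := by
  intro t ht
  obtain ⟨ht0, htpi⟩ := ht
  have hn : (3:ℝ) ≤ (N:ℝ) := by exact_mod_cast hN
  rcases le_total 3 (((N:ℝ)^2-1) * Real.sin t ^ 2) with hA | hB
  · have := regionA (N:ℝ) t hn (Real.sin_pos_of_pos_of_lt_pi ht0 htpi) hA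
    linarith
  · rcases le_total t (π/2) with hhalf | hhalf
    · have := nearZero (N:ℝ) t hn ht0 hhalf hB
      linarith
    · -- t ≥ π/2 : reflect around π
      set u := π - t with hu
      have hu0 : 0 < u := by rw [hu]; linarith
      have hu2 : u ≤ π/2 := by rw [hu]; linarith
      have hsin_u : Real.sin u = Real.sin t := by rw [hu, Real.sin_pi_sub]
      have hcos_u : Real.cos t = -Real.cos u := by
        rw [hu, Real.cos_pi_sub]
        ring
      have hnt : (N:ℝ)*t = (N:ℕ)*π - (N:ℝ)*u := by rw [hu]; ring
      have hsin_nt : Real.sin ((N:ℝ)*t) = -((-1:ℝ)^N * Real.sin ((N:ℝ)*u)) := by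
        rw [hnt]
        exact Real.sin_nat_mul_pi_sub ((N:ℝ)*u) N
      have hcos_nt : Real.cos ((N:ℝ)*t) = (-1:ℝ)^N * Real.cos ((N:ℝ)*u) := by
        rw [hnt]
        exact Real.cos_nat_mul_pi_sub ((N:ℝ)*u) N
      have hBu : ((N:ℝ)^2-1) * Real.sin u ^ 2 ≤ 3 := by rw [hsin_u]; exact hB
      rcases Nat.even_or_odd N with he | ho
      · have hpow : ((-1:ℝ))^N = 1 := he.neg_one_pow
        have hΦ := nearZero (N:ℝ) u hn hu0 hu2 hBu
        rw [hsin_nt, hcos_nt, hpow, ← hsin_u, hcos_u]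
        linarith [hΦ]
      · have hpow : ((-1:ℝ))^N = -1 := ho.neg_one_pow
        obtain ⟨_, hnupi⟩ := nt_bounds (N:ℝ) u hn hu0 hu2 hBu
        have hnu0 : 0 < (N:ℝ)*u := mul_pos (by linarith) hu0
        have hsnu : 0 ≤ Real.sin ((N:ℝ)*u) :=
          Real.sin_nonneg_of_nonneg_of_le_pi hnu0.le hnupi
        have hcu : 0 ≤ Real.cos u :=
          Real.cos_nonneg_of_mem_Icc ⟨by linarith [Real.pi_pos], hu2⟩
        have hsu : 0 < Real.sin u :=
          Real.sin_pos_of_pos_of_lt_pi hu0 (by linarith [Real.pi_pos])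
        have hcos_le : Real.cos ((N:ℝ)*u) ≤ 1 := Real.cos_le_one _
        rw [hsin_nt, hcos_nt, hpow, ← hsin_u, hcos_u]
        have e1 : ((N:ℝ)^2+2)*(Real.cos ((N:ℝ)*u)*Real.sin u) ≤ ((N:ℝ)^2+2)*Real.sin u := by
          have h1 : Real.cos ((N:ℝ)*u)*Real.sin u ≤ Real.sin u := by
            nlinarith [mul_le_mul_of_nonneg_right hcos_le hsu.le]
          exact mul_le_mul_of_nonneg_left h1 (by positivity)
        have e2 : 0 ≤ 3*(N:ℝ)*(Real.sin ((N:ℝ)*u)*Real.cos u) :=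
          mul_nonneg (by linarith) (mul_nonneg hsnu hcu)
        nlinarith [e1, e2, mul_nonneg (show (0:ℝ) ≤ (N:ℝ)^2-4 by nlinarith) hsu.le]
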